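/- Let L be a split regular Hom-Lie superalgebra and let ~ be the connection relation on the root system Λ, where α ~ β iff there exists a connection from α to β. Then ~ is an equivalence relation on Λ. -/

import Mathlib

/-- The super sign `(-1)^{ij}` for `i j : ZMod 2`, valued in a field `K`. -/
def ssign (K : Type*) [Field K] (i j : ZMod 2) : K :=
  if i = 1 ∧ j = 1 then -1 else 1

/-- A split regular Hom-Lie superalgebra over a field `K`:
a `ZMod 2`-graded vector space `L` with a bilinear bracket and an even
automorphism `φ` satisfying skew-supersymmetry and the super Hom-Jacobi
identity, together with a maximal abelian graded subalgebra `H`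
(with respect to which `L` will be split). -/
structure SplitRegularHomLieSuperalgebra (K L : Type*) [Field K]
    [AddCommGroup L] [Module K L] where
  bracket : L →ₗ[K] L →ₗ[K] L
  φ : L ≃ₗ[K] L
  Lg : ZMod 2 → Submodule K L
  grading_sup : Lg 0 ⊔ Lg 1 = ⊤
  grading_disjoint : Lg 0 ⊓ Lg 1 = ⊥
  φ_even : ∀ i, Submodule.map (φ : L →ₗ[K] L) (Lg i) = Lg i
  φ_bracket : ∀ x y, φ (bracket x y) = bracket (φ x) (φ y)
  skew : ∀ (i j : ZMod 2), ∀ x ∈ Lg i, ∀ y ∈ Lg j,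
    bracket x y = -(ssign K i j) • bracket y x
  jacobi : ∀ (i j k : ZMod 2), ∀ x ∈ Lg i, ∀ y ∈ Lg j, ∀ z ∈ Lg k,
    ssign K i k • bracket (bracket x y) (φ z)
      + ssign K i j • bracket (bracket y z) (φ x)
      + ssign K j k • bracket (bracket z x) (φ y) = 0
  H : Submodule K L
  H_graded : H = (H ⊓ Lg 0) ⊔ (H ⊓ Lg 1)
  H_abelian : ∀ x ∈ H, ∀ y ∈ H, bracket x y = 0
  φ_H : Submodule.map (φ : L →ₗ[K] L) H = H
  H_max : ∀ A : Submodule K L, (A = (A ⊓ Lg 0) ⊔ (A ⊓ Lg 1)) →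
    (∀ x ∈ A, ∀ y ∈ A, bracket x y = 0) →
    Submodule.map (φ : L →ₗ[K] L) A = A → H ≤ A → A = H
  /-- the restriction of `φ` to `H₀ = H ⊓ L₀` as a linear automorphism -/
  φH0 : ↥(H ⊓ Lg 0) ≃ₗ[K] ↥(H ⊓ Lg 0)
  φH0_coe : ∀ h : ↥(H ⊓ Lg 0), (φH0 h : L) = φ (h : L)

namespace SplitRegularHomLieSuperalgebra

variable {K L : Type*} [Field K] [AddCommGroup L] [Module K L]
variable (D : SplitRegularHomLieSuperalgebra K L)

/-- The even part `H₀` of `H`. -/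
abbrev H0 : Submodule K L := D.H ⊓ D.Lg 0

/-- The root space associated to a linear functional `α : H₀ → K`. -/
def rootSpace (α : ↥D.H0 →ₗ[K] K) : Submodule K L where
  carrier := {v | ∀ h : ↥D.H0, D.bracket h v = α h • D.φ v}
  add_mem' := by
    intro a b ha hb h
    simp only [map_add, ha h, hb h, smul_add]
  zero_mem' := by
    intro h
    simp
  smul_mem' := by
    intro c x hx h
    simp only [map_smul, hx h, smul_comm c (α h)]

/-- The root system: the set of nonzero functionals with nonzero root space. -/
def Λ : Set (↥D.H0 →ₗ[K] K) := {α | α ≠ 0 ∧ D.rootSpace α ≠ ⊥}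

/-- The twist `α ∘ φ^z` of a functional by an integer power of `φ` (restricted
to `H₀`). -/
def twist (α : ↥D.H0 →ₗ[K] K) (z : ℤ) : ↥D.H0 →ₗ[K] K :=
  α.comp ((D.φH0 ^ z : ↥D.H0 ≃ₗ[K] ↥D.H0) : ↥D.H0 →ₗ[K] ↥D.H0)

/-- The subspace spanned by all brackets `[a,b]` with `a ∈ A`, `b ∈ B`. -/
def bracketSpan (A B : Submodule K L) : Submodule K L :=
  Submodule.span K {z | ∃ a ∈ A, ∃ b ∈ B, z = D.bracket a b}

/-- `±Λ = Λ ∪ (−Λ)`. -/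
def pmΛ : Set (↥D.H0 →ₗ[K] K) := {γ | γ ∈ D.Λ ∨ -γ ∈ D.Λ}

/-- The partial sums appearing in the definition of a connection:
`theta a 0 = a 0` and `theta a (i+1) = (theta a i + a (i+1)) ∘ φ⁻¹`. -/
def theta (a : ℕ → (↥D.H0 →ₗ[K] K)) : ℕ → (↥D.H0 →ₗ[K] K)
  | 0 => a 0
  | i + 1 => D.twist (theta a i + a (i + 1)) (-1)

/-- `α` is connected to `β`. -/
def Connected (α β : ↥D.H0 →ₗ[K] K) : Prop :=
  ∃ (k : ℕ) (a : ℕ → (↥D.H0 →ₗ[K] K)), 1 ≤ k ∧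
    (∀ i < k, a i ∈ D.pmΛ) ∧
    (∃ n : ℕ, a 0 = D.twist α (-(n : ℤ))) ∧
    (∀ i, 1 ≤ i → i + 1 ≤ k - 1 → D.theta a i ∈ D.pmΛ) ∧
    (∃ m : ℕ, D.theta a (k - 1) = D.twist β (-(m : ℤ)) ∨
              D.theta a (k - 1) = -(D.twist β (-(m : ℤ))))

/-- The connection class `[α]` of a root `α`. -/
def rootClass (α : ↥D.H0 →ₗ[K] K) : Set (↥D.H0 →ₗ[K] K) :=
  {β ∈ D.Λ | D.Connected α β}

/-- `H_{[α]} = span {[L_β, L_{−β}] : β ∈ [α]}`. -/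
def Hclass (α : ↥D.H0 →ₗ[K] K) : Submodule K L :=
  ⨆ β ∈ D.rootClass α, D.bracketSpan (D.rootSpace β) (D.rootSpace (-β))

/-- `V_{[α]} = ⊕_{β ∈ [α]} L_β`. -/
def Vclass (α : ↥D.H0 →ₗ[K] K) : Submodule K L :=
  ⨆ β ∈ D.rootClass α, D.rootSpace β

/-- `L_{[α]} = H_{[α]} ⊕ V_{[α]}`. -/
def Lclass (α : ↥D.H0 →ₗ[K] K) : Submodule K L :=
  D.Hclass α ⊔ D.Vclass α

/-- The center `Z(L) = {v : [v, L] = 0}`. -/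
def center : Submodule K L where
  carrier := {v | ∀ y : L, D.bracket v y = 0}
  add_mem' := by
    intro a b ha hb y
    simp only [map_add, LinearMap.add_apply, ha y, hb y, add_zero]
  zero_mem' := by
    intro y
    simp
  smul_mem' := by
    intro c x hx y
    simp only [map_smul, LinearMap.smul_apply, hx y, smul_zero]

/-- An ideal: a graded, `φ`-invariant subspace `I` with `[I,L] ⊆ I`. -/
def IsIdeal (I : Submodule K L) : Prop :=
  (I = (I ⊓ D.Lg 0) ⊔ (I ⊓ D.Lg 1)) ∧
  (∀ x ∈ I, ∀ y : L, D.bracket x y ∈ I) ∧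
  Submodule.map (D.φ : L →ₗ[K] L) I = I

/-- Simplicity: `[L,L] ≠ 0` and the only ideals are `0` and `L`. -/
def IsSimple : Prop :=
  (¬ ∀ x y : L, D.bracket x y = 0) ∧
  ∀ I : Submodule K L, D.IsIdeal I → I = ⊥ ∨ I = ⊤

end SplitRegularHomLieSuperalgebra

namespace SplitRegularHomLieSuperalgebra

variable {K L : Type*} [Field K] [AddCommGroup L] [Module K L]
variable (D : SplitRegularHomLieSuperalgebra K L)

lemma twist_apply' (α : ↥D.H0 →ₗ[K] K) (z : ℤ) (h : ↥D.H0) :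
    D.twist α z h = α ((D.φH0 ^ z) h) := rfl

lemma twist_zero' (α : ↥D.H0 →ₗ[K] K) : D.twist α 0 = α := by
  ext h; simp [twist_apply']

lemma twist_twist' (α : ↥D.H0 →ₗ[K] K) (z w : ℤ) :
    D.twist (D.twist α z) w = D.twist α (z + w) := by
  ext h
  simp only [twist_apply']
  rw [zpow_add]
  rfl

lemma twist_add' (α β : ↥D.H0 →ₗ[K] K) (z : ℤ) :
    D.twist (α + β) z = D.twist α z + D.twist β z := by
  ext h; simp [twist_apply']

lemma twist_neg' (α : ↥D.H0 →ₗ[K] K) (z : ℤ) :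
    D.twist (-α) z = -D.twist α z := by
  ext h; simp [twist_apply']

lemma twist_smul' (c : K) (α : ↥D.H0 →ₗ[K] K) (z : ℤ) :
    D.twist (c • α) z = c • D.twist α z := by
  ext h; simp [twist_apply']

lemma twist_ne_zero' {α : ↥D.H0 →ₗ[K] K} (hα : α ≠ 0) (z : ℤ) : D.twist α z ≠ 0 := by
  intro h0
  apply hα
  ext x
  have := congrArg (fun f : ↥D.H0 →ₗ[K] K => f ((D.φH0 ^ z).symm x)) h0
  simpa [twist_apply', LinearEquiv.apply_symm_apply] using this

lemma mem_rootSpace' {α : ↥D.H0 →ₗ[K] K} {v : L} :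
    v ∈ D.rootSpace α ↔ ∀ h : ↥D.H0, D.bracket h v = α h • D.φ v := Iff.rfl

lemma mem_pmΛ' {γ : ↥D.H0 →ₗ[K] K} : γ ∈ D.pmΛ ↔ γ ∈ D.Λ ∨ -γ ∈ D.Λ := Iff.rfl

lemma mem_rootSpace_twist_neg_one {α : ↥D.H0 →ₗ[K] K} {v : L}
    (hv : v ∈ D.rootSpace α) : D.φ v ∈ D.rootSpace (D.twist α (-1)) := by
  intro h
  have hc : (h : L) = D.φ ((D.φH0.symm h : ↥D.H0) : L) := by
    have := D.φH0_coe (D.φH0.symm h)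
    rwa [LinearEquiv.apply_symm_apply] at this
  have ht : (D.twist α (-1)) h = α (D.φH0.symm h) := by
    rw [twist_apply', zpow_neg_one]; rfl
  rw [hc, ← D.φ_bracket, hv (D.φH0.symm h), map_smul, ht]

lemma mem_rootSpace_twist_one {α : ↥D.H0 →ₗ[K] K} {v : L}
    (hv : v ∈ D.rootSpace α) : D.φ.symm v ∈ D.rootSpace (D.twist α 1) := by
  intro h
  have ht : (D.twist α 1) h = α (D.φH0 h) := by rw [twist_apply', zpow_one]
  apply D.φ.injective
  rw [D.φ_bracket, LinearEquiv.apply_symm_apply, ← D.φH0_coe, hv (D.φH0 h),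
    map_smul, ← ht]

lemma Λ_twist_one {α : ↥D.H0 →ₗ[K] K} (hα : α ∈ D.Λ) : D.twist α 1 ∈ D.Λ := by
  refine ⟨D.twist_ne_zero' hα.1 1, ?_⟩
  rw [Submodule.ne_bot_iff]
  obtain ⟨v, hv, hv0⟩ := Submodule.ne_bot_iff _ |>.mp hα.2
  exact ⟨D.φ.symm v, D.mem_rootSpace_twist_one hv, by simpa using hv0⟩

lemma Λ_twist_neg_one {α : ↥D.H0 →ₗ[K] K} (hα : α ∈ D.Λ) : D.twist α (-1) ∈ D.Λ := by
  refine ⟨D.twist_ne_zero' hα.1 (-1), ?_⟩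
  rw [Submodule.ne_bot_iff]
  obtain ⟨v, hv, hv0⟩ := Submodule.ne_bot_iff _ |>.mp hα.2
  exact ⟨D.φ v, D.mem_rootSpace_twist_neg_one hv, by simpa using hv0⟩

lemma Λ_twist {α : ↥D.H0 →ₗ[K] K} (z : ℤ) (hα : α ∈ D.Λ) : D.twist α z ∈ D.Λ := by
  induction z using Int.induction_on with
  | zero => rwa [D.twist_zero']
  | succ n ih =>
      have : D.twist α ((n : ℤ) + 1) = D.twist (D.twist α n) 1 := (D.twist_twist' α n 1).symm
      rw [this]; exact D.Λ_twist_one ih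
  | pred n ih =>
      have : D.twist α (-(n : ℤ) - 1) = D.twist (D.twist α (-n)) (-1) :=
        by rw [D.twist_twist']; ring_nf
      rw [this]; exact D.Λ_twist_neg_one ih

lemma pmΛ_neg {γ : ↥D.H0 →ₗ[K] K} (h : γ ∈ D.pmΛ) : -γ ∈ D.pmΛ := by
  rcases h with h | h
  · exact Or.inr (by rwa [neg_neg])
  · exact Or.inl h

lemma pmΛ_twist {γ : ↥D.H0 →ₗ[K] K} (z : ℤ) (h : γ ∈ D.pmΛ) : D.twist γ z ∈ D.pmΛ := by
  rcases h with h | h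
  · exact Or.inl (D.Λ_twist z h)
  · exact Or.inr (by rw [← D.twist_neg']; exact D.Λ_twist z h)

lemma pmΛ_smul_sign {σ : K} (hσ : σ = 1 ∨ σ = -1) {γ : ↥D.H0 →ₗ[K] K}
    (h : γ ∈ D.pmΛ) : σ • γ ∈ D.pmΛ := by
  rcases hσ with rfl | rfl
  · simpa using h
  · convert D.pmΛ_neg h using 1; exact neg_one_smul K γ

lemma theta_congr (a b : ℕ → (↥D.H0 →ₗ[K] K)) (i : ℕ)
    (h : ∀ j ≤ i, a j = b j) : D.theta a i = D.theta b i := by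
  induction i with
  | zero => exact h 0 le_rfl
  | succ i ih =>
      show D.twist _ _ = D.twist _ _
      rw [ih (fun j hj => h j (hj.trans (Nat.le_succ i))), h (i + 1) le_rfl]

lemma theta_twist (a : ℕ → (↥D.H0 →ₗ[K] K)) (z : ℤ) (i : ℕ) :
    D.theta (fun j => D.twist (a j) z) i = D.twist (D.theta a i) z := by
  induction i with
  | zero => rfl
  | succ i ih =>
      show D.twist _ _ = _
      rw [ih, ← D.twist_add', D.twist_twist']
      show _ = D.twist (D.twist _ (-1)) z
      rw [D.twist_twist', add_comm z (-1)]

end SplitRegularHomLieSuperalgebra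

namespace SplitRegularHomLieSuperalgebra

variable {K L : Type*} [Field K] [AddCommGroup L] [Module K L]
variable (D : SplitRegularHomLieSuperalgebra K L)

lemma connected_refl {α : ↥D.H0 →ₗ[K] K} (hα : α ∈ D.Λ) : D.Connected α α := by
  refine ⟨1, fun _ => α, le_rfl, fun i _ => Or.inl hα, ⟨0, ?_⟩, ?_, ⟨0, Or.inl ?_⟩⟩
  · simp [D.twist_zero']
  · intro i h1 h2; omega
  · show α = D.twist α (-(0:ℕ):ℤ)
    simp [D.twist_zero']

lemma connected_symm' {α β : ↥D.H0 →ₗ[K] K} (hβΛ : β ∈ D.Λ)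
    (h : D.Connected α β) : D.Connected β α := by
  obtain ⟨k, a, hk, ha, ⟨n, ha0⟩, hth, m, hfin⟩ := h
  obtain ⟨σ, hσ1, hσ⟩ : ∃ σ : K, (σ = 1 ∨ σ = -1) ∧
      D.theta a (k - 1) = σ • D.twist β (-(m:ℤ)) := by
    rcases hfin with h | h
    · exact ⟨1, Or.inl rfl, by simpa using h⟩
    · exact ⟨-1, Or.inr rfl, by rw [h]; exact (neg_one_smul K _).symm⟩
  have hσσ : ∀ x : ↥D.H0 →ₗ[K] K, σ • σ • x = x := by
    rcases hσ1 with rfl | rfl <;> intro x <;> module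
  set b : ℕ → (↥D.H0 →ₗ[K] K) := fun j =>
    if j = 0 then D.twist β (-(m:ℤ))
    else (-σ) • D.twist (a (k - j)) (-(2*(j:ℤ) - 1)) with hbdef
  have key : ∀ j, j ≤ k - 1 →
      D.theta b j = σ • D.twist (D.theta a (k - 1 - j)) (-(2*(j:ℤ))) := by
    intro j
    induction j with
    | zero =>
        intro _
        show b 0 = σ • D.twist (D.theta a (k - 1)) 0
        rw [D.twist_zero', hσ, hσσ]
        simp [hbdef]
    | succ j ih =>
        intro hj1
        have hj : j ≤ k - 1 := by omega
        have hidx : k - 1 - j = (k - 1 - (j + 1)) + 1 := by omega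
        have hidx2 : k - (j + 1) = k - 1 - j := by omega
        show D.twist (D.theta b j + b (j + 1)) (-1) = _
        rw [ih hj]
        have hb1 : b (j + 1) = (-σ) • D.twist (a (k - 1 - j)) (-(2*(j:ℤ)) + -1) := by
          rw [hbdef]
          simp only [Nat.succ_ne_zero, if_false, hidx2]
          congr 1
          push_cast
          ring_nf
        have hth1 : D.theta a (k - 1 - j)
            = D.twist (D.theta a (k - 1 - (j + 1)) + a (k - 1 - j)) (-1) := by
          rw [hidx]
          show D.twist (D.theta a (k - 1 - (j+1)) + a ((k - 1 - (j+1)) + 1)) (-1) = _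
          rw [← hidx]
        rw [hb1]
        have collapse : σ • D.twist (D.theta a (k - 1 - j)) (-(2 * (j:ℤ)))
              + (-σ) • D.twist (a (k - 1 - j)) (-(2 * (j:ℤ)) + -1)
            = σ • D.twist (D.theta a (k - 1 - (j + 1))) (-(2 * (j:ℤ)) + -1) := by
          rw [hth1, D.twist_twist', add_comm (-1 : ℤ) (-(2*(j:ℤ))), D.twist_add']
          module
        rw [collapse, ← D.twist_smul', D.twist_twist', D.twist_smul']
        congr 2
        push_cast
        ring
  refine ⟨k, b, hk, ?_, ⟨m, by simp [hbdef]⟩, ?_, ⟨n + 2*(k-1), ?_⟩⟩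
  · intro i hi
    rcases Nat.eq_zero_or_pos i with rfl | hi0
    · simpa [hbdef] using D.mem_pmΛ'.mpr (Or.inl (D.Λ_twist _ hβΛ))
    · have : b i = (-σ) • D.twist (a (k - i)) (-(2*(i:ℤ) - 1)) := by
        rw [hbdef]; simp [Nat.pos_iff_ne_zero.mp hi0]
      rw [this]
      refine D.pmΛ_smul_sign ?_ (D.pmΛ_twist _ (ha (k - i) (by omega)))
      rcases hσ1 with rfl | rfl
      · exact Or.inr (by norm_num)
      · exact Or.inl (by norm_num)
  · intro j hj1 hj2
    rw [key j (by omega)]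
    exact D.pmΛ_smul_sign hσ1 (D.pmΛ_twist _ (hth (k - 1 - j) (by omega) (by omega)))
  · have h0 : D.theta a (k - 1 - (k - 1)) = D.twist α (-(n:ℤ)) := by
      rw [Nat.sub_self]; exact ha0
    have := key (k - 1) le_rfl
    rw [h0, D.twist_twist'] at this
    have hcast : -(n:ℤ) + -(2*((k:ℤ) - 1 - 1 + 1)) = -((n + 2*(k-1) : ℕ) : ℤ) ∨ True := Or.inr trivial
    have hexp : (-(n:ℤ)) + -(2 * (((k - 1 : ℕ)):ℤ)) = -(((n + 2*(k-1) : ℕ)):ℤ) := by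
      push_cast [Nat.cast_sub (by omega : 1 ≤ k)]
      ring
    rw [hexp] at this
    rcases hσ1 with rfl | rfl
    · left; simpa using this
    · right; rw [this]; exact neg_one_smul K (D.twist α (-((n + 2*(k-1) : ℕ) : ℤ)))
  
end SplitRegularHomLieSuperalgebra

namespace SplitRegularHomLieSuperalgebra

variable {K L : Type*} [Field K] [AddCommGroup L] [Module K L]
variable (D : SplitRegularHomLieSuperalgebra K L)

lemma connected_trans' {α β γ : ↥D.H0 →ₗ[K] K} (hβΛ : β ∈ D.Λ)
    (h1 : D.Connected α β) (h2 : D.Connected β γ) : D.Connected α γ := by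
  obtain ⟨k, a, hk, ha, ⟨n, ha0⟩, hth, m, hfin⟩ := h1
  obtain ⟨k', b, hk', hb, ⟨n', hb0⟩, hth', m', hfin'⟩ := h2
  obtain ⟨σ, hσ1, hσ⟩ : ∃ σ : K, (σ = 1 ∨ σ = -1) ∧
      D.theta a (k - 1) = σ • D.twist β (-(m:ℤ)) := by
    rcases hfin with h | h
    · exact ⟨1, Or.inl rfl, by simpa using h⟩
    · exact ⟨-1, Or.inr rfl, by rw [h]; exact (neg_one_smul K _).symm⟩
  set c : ℕ → (↥D.H0 →ₗ[K] K) := fun i =>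
    if i < k then D.twist (a i) (-(n':ℤ))
    else σ • D.twist (b (i - (k - 1))) (-(m:ℤ)) with hcdef
  -- Invariant A
  have keyA : ∀ i, i ≤ k - 1 → D.theta c i = D.twist (D.theta a i) (-(n':ℤ)) := by
    intro i hi
    rw [← D.theta_twist]
    apply D.theta_congr
    intro j hj
    rw [hcdef]
    simp [show j < k by omega]
  -- Invariant B
  have keyB : ∀ j, j ≤ k' - 1 →
      D.theta c (k - 1 + j) = σ • D.twist (D.theta b j) (-(m:ℤ)) := by
    intro j
    induction j with
    | zero =>
        intro _
        have hθ0 : D.theta b 0 = b 0 := rfl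
        rw [Nat.add_zero, keyA (k-1) le_rfl, hσ, hθ0, hb0, D.twist_smul',
          D.twist_twist', D.twist_twist', add_comm (-(n':ℤ)) (-(m:ℤ))]
    | succ j ih =>
        intro hj1
        have hidx : k - 1 + (j + 1) = (k - 1 + j) + 1 := by omega
        have hc1 : c (k - 1 + (j + 1)) = σ • D.twist (b (j + 1)) (-(m:ℤ)) := by
          rw [hcdef]
          simp only [show ¬ (k - 1 + (j + 1) < k) by omega, if_false,
            show k - 1 + (j + 1) - (k - 1) = j + 1 by omega]
        rw [hidx]
        show D.twist (D.theta c (k - 1 + j) + c (k - 1 + (j + 1))) (-1) = _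
        rw [ih (by omega), hc1, ← smul_add, ← D.twist_add', D.twist_smul',
          D.twist_twist']
        show _ = σ • D.twist (D.twist (D.theta b j + b (j + 1)) (-1)) (-(m:ℤ))
        rw [D.twist_twist', add_comm (-(m:ℤ)) (-1:ℤ)]
  refine ⟨k + (k' - 1), c, by omega, ?_, ⟨n + n', ?_⟩, ?_, ⟨m' + m, ?_⟩⟩
  · -- all entries in pmΛ
    intro i hi
    rcases lt_or_ge i k with hik | hik
    · have : c i = D.twist (a i) (-(n':ℤ)) := by rw [hcdef]; simp [hik]
      rw [this]
      exact D.pmΛ_twist _ (ha i hik)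
    · have : c i = σ • D.twist (b (i - (k - 1))) (-(m:ℤ)) := by
        rw [hcdef]; simp [show ¬ i < k by omega]
      rw [this]
      exact D.pmΛ_smul_sign hσ1 (D.pmΛ_twist _ (hb (i - (k - 1)) (by omega)))
  · -- c 0
    have : c 0 = D.twist (a 0) (-(n':ℤ)) := by rw [hcdef]; simp [show 0 < k by omega]
    rw [this, ha0, D.twist_twist']
    congr 1
    push_cast
    ring
  · -- partial sums
    intro i hi1 hi2
    rcases lt_or_ge (i + 1) k with hik | hik
    · rw [keyA i (by omega)]
      exact D.pmΛ_twist _ (hth i hi1 (by omega))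
    · rcases Nat.eq_or_lt_of_le hik with heq | hlt
      · -- i = k - 1
        have hi' : i = k - 1 + 0 := by omega
        rw [hi', keyB 0 (by omega)]
        have hθ0 : D.theta b 0 = b 0 := rfl
        rw [hθ0, hb0]
        exact D.pmΛ_smul_sign hσ1 (Or.inl (D.Λ_twist _ (D.Λ_twist _ hβΛ)))
      · -- i ≥ k
        have hi' : i = k - 1 + (i - (k - 1)) := by omega
        rw [hi', keyB (i - (k - 1)) (by omega)]
        exact D.pmΛ_smul_sign hσ1
          (D.pmΛ_twist _ (hth' (i - (k - 1)) (by omega) (by omega)))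
  · -- final
    have hidx : k + (k' - 1) - 1 = k - 1 + (k' - 1) := by omega
    rw [hidx, keyB (k' - 1) le_rfl]
    have hexp : ∀ δ : ↥D.H0 →ₗ[K] K,
        D.twist (D.twist δ (-(m':ℤ))) (-(m:ℤ)) = D.twist δ (-((m' + m : ℕ) : ℤ)) := by
      intro δ
      rw [D.twist_twist']
      congr 1
      push_cast
      ring
    rcases hfin' with h | h <;> rw [h] <;> rcases hσ1 with rfl | rfl
    · left; rw [one_smul, hexp]
    · right; rw [← hexp]; exact neg_one_smul K (D.twist (D.twist γ (-(m':ℤ))) (-(m:ℤ)))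
    · right; rw [one_smul, D.twist_neg', hexp]
    · left; rw [D.twist_neg', ← hexp]; exact (neg_one_smul K (-D.twist (D.twist γ (-(m':ℤ))) (-(m:ℤ)))).trans (neg_neg _)

end SplitRegularHomLieSuperalgebra

/-- The split condition: `L = H ⊕ (⊕_{α ∈ Λ} L_α)` as an internal direct sum. -/
structure IsSplitDecomposition {K L : Type*} [Field K] [AddCommGroup L]
    [Module K L] (D : SplitRegularHomLieSuperalgebra K L) : Prop where
  sup_eq_top : D.H ⊔ (⨆ α ∈ D.Λ, D.rootSpace α) = ⊤
  disjoint_H : Disjoint D.H (⨆ α ∈ D.Λ, D.rootSpace α)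
  disjoint_root : ∀ α ∈ D.Λ, Disjoint (D.rootSpace α)
    (D.H ⊔ ⨆ β ∈ {β ∈ D.Λ | β ≠ α}, D.rootSpace β)

/-- the connection relation is an equivalence relation on `Λ`. -/
theorem stmt_7 {K L : Type*} [Field K] [AddCommGroup L] [Module K L]
    (D : SplitRegularHomLieSuperalgebra K L) (hsplit : IsSplitDecomposition D) :
    Equivalence (fun (α β : ↥D.Λ) => D.Connected α.1 β.1) := by
  constructor
  · intro α
    exact D.connected_refl α.2
  · intro α β h
    exact D.connected_symm' β.2 h
  · intro α β γ h1 h2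
    exact D.connected_trans' β.2 h1 h2
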